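/- arXiv:1310.4402 — 2 statements merged into one kernel-verified Lean document; each statement's English description precedes it below -/
import Mathlib

section
/- For all ξ, η ∈ ℂ and r, s ∈ ℝ, ‖Φ(ξ,η,r) − Φ(ξ,η,s)‖ = |r − s|; in other words, for each fixed (ξ,η) the map r ↦ Φ(ξ,η,r) is a unit-speed (arclength) parametrization of a straight line in ℝ³. -/
open Complex

/-- The map `Φ : ℂ × ℂ × ℝ → ℂ × ℝ ≅ ℝ³` sending the oriented line `(ξ, η)` and `r ∈ ℝ`
to the point of that line at signed distance `r` from its closest point to the origin. -/
noncomputable def Phi (ξ η : ℂ) (r : ℝ) : ℂ × ℝ :=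
  ((2 * (η - (starRingEnd ℂ) η * ξ ^ 2) + 2 * ξ * (1 + (normSq ξ : ℂ)) * (r : ℂ)) /
      (1 + (normSq ξ : ℂ)) ^ 2,
    (((-2) * (η * (starRingEnd ℂ) ξ + (starRingEnd ℂ) η * ξ) +
        (1 - (normSq ξ : ℂ) ^ 2) * (r : ℂ)) / (1 + (normSq ξ : ℂ)) ^ 2).re)

/-- `‖Φ(ξ,η,r) − Φ(ξ,η,s)‖ = |r − s|`: for each fixed `(ξ,η)` the map `r ↦ Φ(ξ,η,r)` is a
unit-speed parametrization of a straight line in `ℝ³ ≅ ℂ × ℝ`, where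
`‖(z,x)‖ = √(|z|² + x²)`. -/
theorem stmt2 (ξ η : ℂ) (r s : ℝ) :
    Real.sqrt (‖(Phi ξ η r).1 - (Phi ξ η s).1‖ ^ 2
        + ((Phi ξ η r).2 - (Phi ξ η s).2) ^ 2) = |r - s| := by
  have ht : (0:ℝ) < 1 + normSq ξ :=
    add_pos_of_pos_of_nonneg zero_lt_one (normSq_nonneg ξ)
  have htR : (1 + normSq ξ) ≠ 0 := ne_of_gt ht
  have hne : (1 + (normSq ξ : ℂ)) ≠ 0 := by
    intro h
    apply htR
    have := congrArg Complex.re h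
    simpa using this
  have h1 : (Phi ξ η r).1 - (Phi ξ η s).1 = 2 * ξ * ((r - s : ℝ) : ℂ) / (1 + (normSq ξ : ℂ)) := by
    simp only [Phi]
    field_simp
    push_cast
    ring
  have h2 : (Phi ξ η r).2 - (Phi ξ η s).2
      = (1 - normSq ξ ^ 2) * (r - s) / (1 + normSq ξ) ^ 2 := by
    simp only [Phi]
    rw [← Complex.sub_re]
    have e : ((-2) * (η * (starRingEnd ℂ) ξ + (starRingEnd ℂ) η * ξ) +
        (1 - (normSq ξ : ℂ) ^ 2) * (r : ℂ)) / (1 + (normSq ξ : ℂ)) ^ 2 -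
        ((-2) * (η * (starRingEnd ℂ) ξ + (starRingEnd ℂ) η * ξ) +
        (1 - (normSq ξ : ℂ) ^ 2) * (s : ℂ)) / (1 + (normSq ξ : ℂ)) ^ 2
        = (((1 - normSq ξ ^ 2) * (r - s) / (1 + normSq ξ) ^ 2 : ℝ) : ℂ) := by
      push_cast
      field_simp
      ring
    rw [e, Complex.ofReal_re]
  have habs : ‖(Phi ξ η r).1 - (Phi ξ η s).1‖ ^ 2
      = 4 * normSq ξ * (r - s) ^ 2 / (1 + normSq ξ) ^ 2 := by
    rw [h1, Complex.sq_norm, Complex.normSq_div, Complex.normSq_mul, Complex.normSq_mul]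
    have e1 : (1 + (normSq ξ : ℂ)) = ((1 + normSq ξ : ℝ) : ℂ) := by push_cast; ring
    have e2 : normSq (2:ℂ) = 4 := by simp [Complex.normSq_apply]; norm_num
    rw [e1, Complex.normSq_ofReal, Complex.normSq_ofReal, e2]
    ring
  have key : ‖(Phi ξ η r).1 - (Phi ξ η s).1‖ ^ 2
        + ((Phi ξ η r).2 - (Phi ξ η s).2) ^ 2 = (r - s) ^ 2 := by
    rw [habs, h2]
    field_simp
    ring
  rw [key, Real.sqrt_sq_eq_abs]
end

section
/- The translation of ℝ³ taking the origin to (α, b) ∈ ℂ × ℝ acts on oriented-line coordinates by η ↦ η + ½(α − 2bξ − ᾱξ²) and r ↦ r + (αξ̄ + ᾱξ + b(1−|ξ|²))/(1+|ξ|²): precisely, for all ξ, η ∈ ℂ and r ∈ ℝ, Φ(ξ, η + ½(α − 2bξ − ᾱξ²), r + (αξ̄ + ᾱξ + b(1−|ξ|²))/(1+|ξ|²)) = Φ(ξ, η, r) + (α, b). -/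
open Complex

/-- The translation of `ℝ³` taking the origin to `(α, b) ∈ ℂ × ℝ` acts on oriented-line
coordinates by `η ↦ η + ½(α − 2bξ − ᾱξ²)` and
`r ↦ r + (αξ̄ + ᾱξ + b(1−|ξ|²))/(1+|ξ|²)`. -/
theorem stmt3 (α : ℂ) (b : ℝ) (ξ η : ℂ) (r : ℝ) :
    Phi ξ (η + (1 / 2) * (α - 2 * (b : ℂ) * ξ - (starRingEnd ℂ) α * ξ ^ 2))
        (r + ((α * (starRingEnd ℂ) ξ + (starRingEnd ℂ) α * ξ +
            (b : ℂ) * (1 - (normSq ξ : ℂ))) / (1 + (normSq ξ : ℂ))).re)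
      = ((Phi ξ η r).1 + α, (Phi ξ η r).2 + b) := by
  set w : ℂ := (α * (starRingEnd ℂ) ξ + (starRingEnd ℂ) α * ξ +
      (b : ℂ) * (1 - (normSq ξ : ℂ))) / (1 + (normSq ξ : ℂ)) with hw
  have hD : (1 + (normSq ξ : ℂ)) ≠ 0 := by
    intro h
    have := congrArg Complex.re h
    simp at this
    nlinarith [normSq_nonneg ξ, this]
  have hwre : ((w.re : ℂ)) = w := by
    rw [Complex.conj_eq_iff_re.symm.trans eq_comm] at *
    rw [hw]
    rw [map_div₀]
    simp only [map_add, map_mul, map_sub, map_one, map_ofNat, Complex.conj_conj, Complex.conj_ofReal]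
    ring
  have hns : ((normSq ξ : ℂ)) = ξ * (starRingEnd ℂ) ξ := by
    rw [Complex.mul_conj]
  unfold Phi
  have hcast : ((r + w.re : ℝ) : ℂ) = (r : ℂ) + w := by
    push_cast
    rw [hwre]
  refine Prod.ext ?_ ?_
  · simp only [hcast]
    rw [hw]
    simp only [map_add, map_mul, map_sub, map_one, map_ofNat, Complex.conj_conj, Complex.conj_ofReal]
    field_simp
    simp only [map_ofNat, Complex.conj_ofReal, map_div₀, map_one, map_pow]
    rw [hns]
    ring
  · simp only [hcast]
    have key : ((-2) * ((η + (1 / 2) * (α - 2 * (b : ℂ) * ξ - (starRingEnd ℂ) α * ξ ^ 2)) *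
          (starRingEnd ℂ) ξ +
          (starRingEnd ℂ) (η + (1 / 2) * (α - 2 * (b : ℂ) * ξ - (starRingEnd ℂ) α * ξ ^ 2)) * ξ) +
        (1 - (normSq ξ : ℂ) ^ 2) * ((r : ℂ) + w)) / (1 + (normSq ξ : ℂ)) ^ 2 =
        ((-2) * (η * (starRingEnd ℂ) ξ + (starRingEnd ℂ) η * ξ) +
          (1 - (normSq ξ : ℂ) ^ 2) * (r : ℂ)) / (1 + (normSq ξ : ℂ)) ^ 2 + (b : ℂ) := by
      rw [hw]
      simp only [map_add, map_mul, map_sub, map_one, map_pow, Complex.conj_conj,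
        Complex.conj_ofReal, map_one, map_ofNat, map_div₀]
      field_simp
      rw [hns]
      ring
    rw [key]
    simp
end
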